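/- Let σ be a real number with 0 < σ ≤ 1. Then there exists a constant C > 0 (depending only on σ) such that for every real number t ≥ 1 one has ∫_{t+1}^{∞} e^{−2π u} · u^{2σ − 2} · (u − t)^{2σ − 2} · log(u) du ≤ C · e^{−2π t} · (1 + t)^{2σ − 2} · log(1 + t). -/

import Mathlib

open MeasureTheory

private lemma csb_meas (p t c : ℝ) :
    Measurable fun u : ℝ =>
      Real.exp (-(c * u)) * u ^ p * (u - t) ^ p * Real.log u := by
  have h1 : Measurable fun u : ℝ => Real.exp (-(c * u)) :=
    (measurable_const.mul measurable_id).neg.exp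
  have h2 : Measurable fun u : ℝ => u ^ p := by measurability
  have h3 : Measurable fun u : ℝ => (u - t) ^ p := by measurability
  exact ((h1.mul h2).mul h3).mul Real.measurable_log

private lemma csb_aux {t u : ℝ} (ht : 1 ≤ t) (hu : t + 1 < u) :
    Real.log u ≤ (u - t) * ((1 + 1 / Real.log 2) * Real.log (1 + t)) := by
  have hlog2 : (0:ℝ) < Real.log 2 := Real.log_pos one_lt_two
  have hv : (1:ℝ) ≤ u - t := by linarith
  have ht1 : (2:ℝ) ≤ 1 + t := by linarith
  have hlogt : Real.log 2 ≤ Real.log (1 + t) := Real.log_le_log two_pos ht1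
  have hlogt0 : 0 < Real.log (1 + t) := lt_of_lt_of_le hlog2 hlogt
  have hle : u ≤ (u - t) * (1 + t) := by nlinarith
  have h1 : Real.log u ≤ Real.log ((u - t) * (1 + t)) :=
    Real.log_le_log (by linarith) hle
  rw [Real.log_mul (by linarith) (by linarith)] at h1
  have h2 : Real.log (u - t) ≤ u - t := by
    have := Real.log_le_sub_one_of_pos (x := u - t) (by linarith)
    linarith
  have h3 : (1:ℝ) ≤ Real.log (1 + t) / Real.log 2 :=
    (one_le_div hlog2).mpr hlogt
  have h4 : u - t ≤ (u - t) * (Real.log (1 + t) / Real.log 2) := by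
    nlinarith
  have h5 : Real.log (1 + t) ≤ (u - t) * Real.log (1 + t) := by
    nlinarith
  calc Real.log u ≤ Real.log (u - t) + Real.log (1 + t) := h1
    _ ≤ (u - t) * (Real.log (1 + t) / Real.log 2) + (u - t) * Real.log (1 + t) := by
        linarith
    _ = (u - t) * ((1 + 1 / Real.log 2) * Real.log (1 + t)) := by ring

/-- Continuous-spectrum tail estimate: for `0 < σ ≤ 1` there is `C > 0` such
that for all `t ≥ 1`,
`∫_{t+1}^∞ e^{-2πu} u^{2σ-2} (u-t)^{2σ-2} log u du
  ≤ C e^{-2πt} (1+t)^{2σ-2} log(1+t)`. -/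
theorem continuous_spectrum_tail (σ : ℝ) (hσ0 : 0 < σ) (hσ1 : σ ≤ 1) :
    ∃ C > 0, ∀ t : ℝ, 1 ≤ t →
      (∫ u in Set.Ioi (t + 1),
          Real.exp (-(2 * Real.pi * u)) * u ^ (2*σ - 2) * (u - t) ^ (2*σ - 2) *
            Real.log u) ≤
        C * Real.exp (-(2 * Real.pi * t)) * (1 + t) ^ (2*σ - 2) *
          Real.log (1 + t) := by
  have hlog2 : (0:ℝ) < Real.log 2 := Real.log_pos one_lt_two
  have hπ : (1:ℝ) ≤ Real.pi := by linarith [Real.pi_gt_three]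
  refine ⟨1 + 1 / Real.log 2, by positivity, ?_⟩
  intro t ht
  set K : ℝ := 1 + 1 / Real.log 2 with hKdef
  have hK0 : 0 < K := by positivity
  set p : ℝ := 2 * σ - 2 with hpdef
  have hp0 : p ≤ 0 := by simp only [hpdef]; linarith
  have hlogt0 : 0 < Real.log (1 + t) := Real.log_pos (by linarith)
  have ht1pos : (0:ℝ) < 1 + t := by linarith
  set A : ℝ := K * Real.exp (-(2 * Real.pi * t)) * (1 + t) ^ p * Real.log (1 + t) with hAdef
  have hA0 : 0 < A := by
    have : (0:ℝ) < (1 + t) ^ p := Real.rpow_pos_of_pos ht1pos p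
    positivity
  set f : ℝ → ℝ := fun u =>
    Real.exp (-(2 * Real.pi * u)) * u ^ p * (u - t) ^ p * Real.log u with hfdef
  set g : ℝ → ℝ := fun u => A * (Real.exp t * Real.exp (-u)) with hgdef
  -- pointwise bound
  have hbound : ∀ u ∈ Set.Ioi (t + 1), f u ≤ g u := by
    intro u hu
    simp only [Set.mem_Ioi] at hu
    have hu0 : (0:ℝ) < u := by linarith
    have hut : (1:ℝ) ≤ u - t := by linarith
    have hlogu0 : 0 ≤ Real.log u := Real.log_nonneg (by linarith)
    have h1 : u ^ p ≤ (1 + t) ^ p :=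
      Real.rpow_le_rpow_of_nonpos ht1pos (by linarith) hp0
    have h2 : (u - t) ^ p ≤ 1 := Real.rpow_le_one_of_one_le_of_nonpos hut hp0
    have h3 : Real.log u ≤ (u - t) * (K * Real.log (1 + t)) := csb_aux ht hu
    have hexp : Real.exp (-(2 * Real.pi * u)) * (u - t) ≤
        Real.exp (-(2 * Real.pi * t)) * (Real.exp t * Real.exp (-u)) := by
      rw [← Real.exp_add, ← Real.exp_add]
      have hv : u - t ≤ Real.exp ((2 * Real.pi - 1) * (u - t)) := by
        have h5 : u - t ≤ Real.exp (u - t) := (Real.add_one_le_exp (u - t)).trans'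
          (by linarith)
        have h6 : Real.exp (u - t) ≤ Real.exp ((2 * Real.pi - 1) * (u - t)) := by
          apply Real.exp_le_exp.mpr
          nlinarith
        linarith
      calc Real.exp (-(2 * Real.pi * u)) * (u - t)
          ≤ Real.exp (-(2 * Real.pi * u)) * Real.exp ((2 * Real.pi - 1) * (u - t)) := by
            exact mul_le_mul_of_nonneg_left hv (Real.exp_pos _).le
        _ = Real.exp (-(2 * Real.pi * t) + (t + -u)) := by
            rw [← Real.exp_add]; ring_nf
    have hrp : (0:ℝ) ≤ (1 + t) ^ p := (Real.rpow_pos_of_pos ht1pos p).le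
    have hup : (0:ℝ) ≤ u ^ p := (Real.rpow_pos_of_pos hu0 p).le
    have hutp : (0:ℝ) ≤ (u - t) ^ p := (Real.rpow_pos_of_pos (by linarith) p).le
    have hexp0 : (0:ℝ) ≤ Real.exp (-(2 * Real.pi * u)) := (Real.exp_pos _).le
    calc f u = Real.exp (-(2 * Real.pi * u)) * u ^ p * (u - t) ^ p * Real.log u := rfl
      _ ≤ Real.exp (-(2 * Real.pi * u)) * (1 + t) ^ p * 1 *
            ((u - t) * (K * Real.log (1 + t))) := by
          have hfl0 : 0 ≤ (u - t) * (K * Real.log (1 + t)) := by positivity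
          apply mul_le_mul (by
            apply mul_le_mul (mul_le_mul_of_nonneg_left h1 hexp0) h2 hutp
            positivity) h3 hlogu0
          positivity
      _ = (Real.exp (-(2 * Real.pi * u)) * (u - t)) * ((1 + t) ^ p *
            (K * Real.log (1 + t))) := by ring
      _ ≤ (Real.exp (-(2 * Real.pi * t)) * (Real.exp t * Real.exp (-u))) *
            ((1 + t) ^ p * (K * Real.log (1 + t))) := by
          apply mul_le_mul_of_nonneg_right hexp
          positivity
      _ = g u := by simp only [hgdef, hAdef]; ring
  have hmeasIoi : MeasurableSet (Set.Ioi (t + 1)) := measurableSet_Ioi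
  -- integrability of g
  have hg_int : IntegrableOn g (Set.Ioi (t + 1)) := by
    have h := (exp_neg_integrableOn_Ioi (t + 1) (one_pos)).const_mul (A * Real.exp t)
    simpa only [hgdef, neg_one_mul, mul_assoc, IntegrableOn] using h
  -- nonnegativity of f on the set
  have hf_nonneg : ∀ u ∈ Set.Ioi (t + 1), 0 ≤ f u := by
    intro u hu
    simp only [Set.mem_Ioi] at hu
    have hu0 : (0:ℝ) < u := by linarith
    have h1 : (0:ℝ) ≤ u ^ p := (Real.rpow_pos_of_pos hu0 p).le
    have h2 : (0:ℝ) ≤ (u - t) ^ p := (Real.rpow_pos_of_pos (by linarith) p).le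
    have h3 : (0:ℝ) ≤ Real.log u := Real.log_nonneg (by linarith)
    positivity
  -- measurability of f
  have hf_meas : AEStronglyMeasurable f (volume.restrict (Set.Ioi (t + 1))) := by
    apply Measurable.aestronglyMeasurable
    exact csb_meas p t (2 * Real.pi)
  -- integrability of f
  have hf_int : IntegrableOn f (Set.Ioi (t + 1)) := by
    refine hg_int.mono' hf_meas ?_
    rw [ae_restrict_iff' hmeasIoi]
    filter_upwards with u hu
    rw [Real.norm_eq_abs, abs_of_nonneg (hf_nonneg u hu)]
    exact hbound u hu
  have hint_le : (∫ u in Set.Ioi (t + 1), f u) ≤ ∫ u in Set.Ioi (t + 1), g u :=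
    setIntegral_mono_on hf_int hg_int hmeasIoi hbound
  have hg_val : (∫ u in Set.Ioi (t + 1), g u) = A * Real.exp (-1) := by
    rw [hgdef]
    rw [integral_const_mul, integral_const_mul,
      integral_exp_neg_Ioi, ← Real.exp_add]
    ring_nf
  have hfinal : A * Real.exp (-1) ≤ A := by
    nlinarith [Real.exp_lt_one_iff.mpr (show (-1:ℝ) < 0 by norm_num), hA0]
  calc (∫ u in Set.Ioi (t + 1), f u) ≤ ∫ u in Set.Ioi (t + 1), g u := hint_le
    _ = A * Real.exp (-1) := hg_val
    _ ≤ A := hfinal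
    _ = K * Real.exp (-(2 * Real.pi * t)) * (1 + t) ^ p * Real.log (1 + t) := rfl
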